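/- In the sphere braid group B₄(S²), the identity (δ₂δ₃δ₂)² = ((δ₁δ₂)δ₁)⁻² holds; that is, the square of the half twist δ₂δ₃δ₂ equals the inverse of the square of the half twist ξ₃ = δ₁δ₂δ₁. -/
import Mathlib


/-- The relators of the sphere braid group `B₄(S²)`: the two braid relations, the
commutation relation, and the sphere relation `δ₁δ₂δ₃δ₃δ₂δ₁ = 1`. -/
def sphereBraidRel4 : Set (FreeGroup (Fin 3)) :=
  {FreeGroup.of 0 * FreeGroup.of 1 * FreeGroup.of 0 *
      (FreeGroup.of 1 * FreeGroup.of 0 * FreeGroup.of 1)⁻¹,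
   FreeGroup.of 1 * FreeGroup.of 2 * FreeGroup.of 1 *
      (FreeGroup.of 2 * FreeGroup.of 1 * FreeGroup.of 2)⁻¹,
   FreeGroup.of 0 * FreeGroup.of 2 * (FreeGroup.of 2 * FreeGroup.of 0)⁻¹,
   FreeGroup.of 0 * FreeGroup.of 1 * FreeGroup.of 2 *
      FreeGroup.of 2 * FreeGroup.of 1 * FreeGroup.of 0}

/-- The sphere braid group `B₄(S²)` on 4 strands. -/
abbrev SphereBraidGroup4 : Type := PresentedGroup sphereBraidRel4

/-- The standard generators `δ₁, δ₂, δ₃` of `B₄(S²)` (indexed by `0, 1, 2`). -/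
def δ (i : Fin 3) : SphereBraidGroup4 := PresentedGroup.of i

lemma sphere_mk_rel_eq_one {r : FreeGroup (Fin 3)} (hr : r ∈ sphereBraidRel4) :
    PresentedGroup.mk sphereBraidRel4 r = 1 :=
  (QuotientGroup.eq_one_iff r).mpr (Subgroup.subset_normalClosure hr)

lemma sphere_rel1 : δ 0 * δ 1 * δ 0 = δ 1 * δ 0 * δ 1 := by
  have h := sphere_mk_rel_eq_one (r := FreeGroup.of 0 * FreeGroup.of 1 * FreeGroup.of 0 *
      (FreeGroup.of 1 * FreeGroup.of 0 * FreeGroup.of 1)⁻¹) (by simp [sphereBraidRel4])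
  simp only [map_mul, map_inv] at h
  have h' : δ 0 * δ 1 * δ 0 * (δ 1 * δ 0 * δ 1)⁻¹ = 1 := h
  rw [mul_inv_eq_one] at h'
  exact h'

lemma sphere_rel2 : δ 1 * δ 2 * δ 1 = δ 2 * δ 1 * δ 2 := by
  have h := sphere_mk_rel_eq_one (r := FreeGroup.of 1 * FreeGroup.of 2 * FreeGroup.of 1 *
      (FreeGroup.of 2 * FreeGroup.of 1 * FreeGroup.of 2)⁻¹) (by simp [sphereBraidRel4])
  simp only [map_mul, map_inv] at h
  have h' : δ 1 * δ 2 * δ 1 * (δ 2 * δ 1 * δ 2)⁻¹ = 1 := h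
  rw [mul_inv_eq_one] at h'
  exact h'

lemma sphere_rel4 : δ 0 * δ 1 * δ 2 * δ 2 * δ 1 * δ 0 = 1 := by
  have h := sphere_mk_rel_eq_one (r := FreeGroup.of 0 * FreeGroup.of 1 * FreeGroup.of 2 *
      FreeGroup.of 2 * FreeGroup.of 1 * FreeGroup.of 0) (by simp [sphereBraidRel4])
  simp only [map_mul] at h
  exact h

/-- In `B₄(S²)`, the square of the half twist `δ₂δ₃δ₂` is the inverse of the square
of the half twist `ξ₃ = δ₁δ₂δ₁`. -/
theorem halfTwist_sq_eq_inv :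
    (δ 1 * δ 2 * δ 1) ^ 2 = ((δ 0 * δ 1 * δ 0) ^ 2)⁻¹ := by
  set a := δ 0 with ha
  set b := δ 1 with hb
  set c := δ 2 with hc
  have rel1 : a * b * a = b * a * b := sphere_rel1
  have rel2 : b * c * b = c * b * c := sphere_rel2
  have rel4 : a * b * c * c * b * a = 1 := sphere_rel4
  -- b * (c*c) * b = a⁻¹ * a⁻¹
  have h4 : b * (c * c) * b = a⁻¹ * a⁻¹ := by
    have e : b * (c * c) * b = a⁻¹ * (a * b * c * c * b * a) * a⁻¹ := by group
    rw [e, rel4]; group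
  have hcc : c * c = b⁻¹ * (a⁻¹ * a⁻¹) * b⁻¹ := by
    have e : c * c = b⁻¹ * (b * (c * c) * b) * b⁻¹ := by group
    rw [e, h4]
  -- A² = b*a*(a*b*a)*a
  have hA1 : (a * b * a) ^ 2 = b * a * (b * a * b) * a := by
    rw [sq]
    nth_rewrite 1 [rel1]
    group
  have hA2 : (a * b * a) ^ 2 = b * a * (a * b * a) * a := by
    rw [hA1, ← rel1]
  -- B² = b*c*c*b*c*c
  have hB1 : (b * c * b) ^ 2 = b * c * (b * c * b) * c := by
    rw [sq]
    nth_rewrite 2 [rel2]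
    group
  have hB2 : (b * c * b) ^ 2 = b * (c * c) * b * (c * c) := by
    rw [hB1, rel2]; group
  have hB3 : (b * c * b) ^ 2 = a⁻¹ * a⁻¹ * (b⁻¹ * (a⁻¹ * a⁻¹) * b⁻¹) := by
    rw [hB2, hcc]; group
  rw [hB3, hA2]
  group
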